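/- If three quantum Latin cubes Φ, Ψ, Υ of dimension d are composed entirely of standard basis vectors (i.e., come from classical Latin cubes) and are orthogonal as quantum Latin cubes, then the underlying classical Latin cubes are orthogonal (their superposition map [d]³ → [d]³ is a bijection) and satisfy property (B). -/

import Mathlib

noncomputable section

/-- The inner product on a complex inner product space, as a function into `ℂ`. -/
def ip {E : Type*} [NormedAddCommGroup E] [InnerProductSpace ℂ E] (x y : E) : ℂ :=
  inner ℂ x y

/-- A quantum Latin cube over index set `ι` with values in the Hilbert space `E`:
every line (fixing two of the three indices) is an orthonormal basis. -/
def IsQLCOn {ι : Type*} {E : Type*} [NormedAddCommGroup E] [InnerProductSpace ℂ E]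
    (Φ : ι → ι → ι → E) : Prop :=
  (∀ j k, Orthonormal ℂ fun i => Φ i j k) ∧
  (∀ i k, Orthonormal ℂ fun j => Φ i j k) ∧
  (∀ i j, Orthonormal ℂ (Φ i j))

/-- For each fixed value of one of the three indices, the corresponding planes of the
two cubes form a pair of orthogonal quantum Latin squares. -/
def PlanesOrth {ι : Type*} [DecidableEq ι] {E : Type*} [NormedAddCommGroup E]
    [InnerProductSpace ℂ E] (Φ Ψ : ι → ι → ι → E) : Prop :=
  (∀ i, ∀ j k j' k', ip (Φ i j k) (Φ i j' k') * ip (Ψ i j k) (Ψ i j' k') =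
    if j = j' ∧ k = k' then 1 else 0) ∧
  (∀ j, ∀ i k i' k', ip (Φ i j k) (Φ i' j k') * ip (Ψ i j k) (Ψ i' j k') =
    if i = i' ∧ k = k' then 1 else 0) ∧
  (∀ k, ∀ i j i' j', ip (Φ i j k) (Φ i' j' k) * ip (Ψ i j k) (Ψ i' j' k) =
    if i = i' ∧ j = j' then 1 else 0)

/-- Three quantum Latin cubes are orthogonal: (1) the triple tensor products over all
cells form an orthonormal basis of `E ⊗ E ⊗ E`, expressed via
`⟨Φ,Φ'⟩⟨Ψ,Ψ'⟩⟨Υ,Υ'⟩ = δ_{ii'}δ_{jj'}δ_{kk'}`; and (2) every pair of corresponding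
planes of any two of the cubes is a pair of orthogonal quantum Latin squares. -/
def TripleOrthQLC {ι : Type*} [DecidableEq ι] {E : Type*} [NormedAddCommGroup E]
    [InnerProductSpace ℂ E] (Φ Ψ Υ : ι → ι → ι → E) : Prop :=
  (∀ i j k i' j' k',
    ip (Φ i j k) (Φ i' j' k') * ip (Ψ i j k) (Ψ i' j' k') * ip (Υ i j k) (Υ i' j' k') =
      if i = i' ∧ j = j' ∧ k = k' then 1 else 0) ∧
  PlanesOrth Φ Ψ ∧ PlanesOrth Φ Υ ∧ PlanesOrth Ψ Υ

/-- A (classical) Latin cube of order `d`: fixing any two of the three coordinates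
gives a bijection in the remaining one. -/
def IsLatinCube {d : ℕ} (L : Fin d → Fin d → Fin d → Fin d) : Prop :=
  (∀ j k, Function.Bijective fun i => L i j k) ∧
  (∀ i k, Function.Bijective fun j => L i j k) ∧
  (∀ i j, Function.Bijective (L i j))

/-- Three Latin cubes are orthogonal: their superposition is a bijection of `[d]³`. -/
def TripleOrthLC {d : ℕ} (L L' L'' : Fin d → Fin d → Fin d → Fin d) : Prop :=
  Function.Bijective fun p : Fin d × Fin d × Fin d =>
    (L p.1 p.2.1 p.2.2, L' p.1 p.2.1 p.2.2, L'' p.1 p.2.1 p.2.2)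

/-- Property (B) for a pair of Latin cubes: every pair of corresponding planes
(obtained by fixing one coordinate) forms a pair of orthogonal Latin squares. -/
def PlanesOrthLC {d : ℕ} (L L' : Fin d → Fin d → Fin d → Fin d) : Prop :=
  (∀ i, Function.Bijective fun p : Fin d × Fin d => (L i p.1 p.2, L' i p.1 p.2)) ∧
  (∀ j, Function.Bijective fun p : Fin d × Fin d => (L p.1 j p.2, L' p.1 j p.2)) ∧
  (∀ k, Function.Bijective fun p : Fin d × Fin d => (L p.1 p.2 k, L' p.1 p.2 k))

/-- If three quantum Latin cubes built from classical Latin cubes (entries are the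
standard basis vectors `|L(i,j,k)⟩`) are orthogonal as quantum Latin cubes, then the
underlying classical Latin cubes are orthogonal and satisfy property (B). -/
lemma ip_single_single {d : ℕ} (a b : Fin d) :
    ip (EuclideanSpace.single a (1 : ℂ)) (EuclideanSpace.single b (1 : ℂ)) =
      if a = b then 1 else 0 := by
  simp only [ip, EuclideanSpace.inner_single_left, map_one, one_mul,
    EuclideanSpace.single_apply]

lemma prod_ifs {d : ℕ} (a b c a' b' c' : Fin d) :
    (if a = a' then (1:ℂ) else 0) * (if b = b' then 1 else 0) * (if c = c' then 1 else 0) =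
      if a = a' ∧ b = b' ∧ c = c' then 1 else 0 := by
  by_cases h1 : a = a' <;> by_cases h2 : b = b' <;> by_cases h3 : c = c' <;>
    simp [h1, h2, h3]

lemma inj_of_delta {α β : Type*} [DecidableEq α] [DecidableEq β] (f : α → β)
    (h : ∀ p q, (if f p = f q then (1:ℂ) else 0) = if p = q then 1 else 0) :
    Function.Injective f := by
  intro p q hpq
  have hh := h p q
  rw [if_pos hpq] at hh
  by_contra hne
  rw [if_neg hne] at hh
  exact one_ne_zero hh

lemma prod_ifs2 {d : ℕ} (a b a' b' : Fin d) :
    (if a = a' then (1:ℂ) else 0) * (if b = b' then 1 else 0) =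
      if a = a' ∧ b = b' then 1 else 0 := by
  by_cases h1 : a = a' <;> by_cases h2 : b = b' <;> simp [h1, h2]

theorem classical_qlc_orth_implies_classical_orth {d : ℕ}
    (L M N : Fin d → Fin d → Fin d → Fin d)
    (hL : IsLatinCube L) (hM : IsLatinCube M) (hN : IsLatinCube N)
    (h : TripleOrthQLC
      (fun i j k => EuclideanSpace.single (L i j k) (1 : ℂ))
      (fun i j k => EuclideanSpace.single (M i j k) (1 : ℂ))
      (fun i j k => EuclideanSpace.single (N i j k) (1 : ℂ))) :
    TripleOrthLC L M N ∧
      PlanesOrthLC L M ∧ PlanesOrthLC L N ∧ PlanesOrthLC M N := by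
  obtain ⟨h1, hLM, hLN, hMN⟩ := h
  have planes : ∀ A B : Fin d → Fin d → Fin d → Fin d,
      PlanesOrth (fun i j k => EuclideanSpace.single (A i j k) (1 : ℂ))
        (fun i j k => EuclideanSpace.single (B i j k) (1 : ℂ)) → PlanesOrthLC A B := by
    intro A B hAB
    obtain ⟨hp1, hp2, hp3⟩ := hAB
    refine ⟨fun i => ?_, fun j => ?_, fun k => ?_⟩
    · refine Finite.injective_iff_bijective.mp (inj_of_delta _ fun p q => ?_)
      have := hp1 i p.1 p.2 q.1 q.2
      simp only [ip_single_single, prod_ifs2] at this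
      simp only [Prod.ext_iff, Prod.mk.injEq]
      exact this
    · refine Finite.injective_iff_bijective.mp (inj_of_delta _ fun p q => ?_)
      have := hp2 j p.1 p.2 q.1 q.2
      simp only [ip_single_single, prod_ifs2] at this
      simp only [Prod.ext_iff, Prod.mk.injEq]
      exact this
    · refine Finite.injective_iff_bijective.mp (inj_of_delta _ fun p q => ?_)
      have := hp3 k p.1 p.2 q.1 q.2
      simp only [ip_single_single, prod_ifs2] at this
      simp only [Prod.ext_iff, Prod.mk.injEq]
      exact this
  refine ⟨?_, planes L M hLM, planes L N hLN, planes M N hMN⟩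
  refine Finite.injective_iff_bijective.mp (inj_of_delta _ fun p q => ?_)
  have := h1 p.1 p.2.1 p.2.2 q.1 q.2.1 q.2.2
  simp only [ip_single_single, prod_ifs] at this
  simp only [Prod.ext_iff, Prod.mk.injEq]
  exact this
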